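/- Existence of a solution to the linear system: for every k ∈ ℕ there exist a_1, …, a_{r+s-1} ∈ R such that C_k = a_1 C_1 + ⋯ + a_{r+s-1} C_{r+s-1}, where C_m := ∑_{i=0}^{m-1} A^{m-1-i} C B^i. -/

import Mathlib

open Polynomial Matrix

theorem linear_system_has_solution {R : Type*} [CommRing R] {r s : ℕ}
    (A : Matrix (Fin r) (Fin r) R) (B : Matrix (Fin s) (Fin s) R)
    (C : Matrix (Fin r) (Fin s) R) (k : ℕ) :
    ∃ a : ℕ → R,
      ((Matrix.fromBlocks A C 0 B) ^ k).toBlocks₁₂ =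
        ∑ i ∈ Finset.Icc 1 (r + s - 1),
          a i • ((Matrix.fromBlocks A C 0 B) ^ i).toBlocks₁₂ := by
  set M := Matrix.fromBlocks A C 0 B with hMdef
  rcases subsingleton_or_nontrivial R with h | h
  · exact ⟨0, Subsingleton.elim _ _⟩
  by_cases hrs : r + s = 0
  · refine ⟨0, ?_⟩
    have hr : r = 0 := by omega
    subst hr
    ext i j
    exact i.elim0
  have hmonic := Matrix.charpoly_monic M
  have hdeg : M.charpoly.natDegree = r + s := by
    rw [Matrix.charpoly_natDegree_eq_dim]; simp
  set p := (X : R[X]) ^ k %ₘ M.charpoly with hp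
  have hpd : p.natDegree < r + s := by
    by_cases hp0 : p = 0
    · simp [hp0]; omega
    · rw [Polynomial.natDegree_lt_iff_degree_lt hp0]
      calc p.degree < M.charpoly.degree :=
            Polynomial.degree_modByMonic_lt _ hmonic
        _ = (r + s : ℕ) := by
            rw [Polynomial.degree_eq_natDegree hmonic.ne_zero, hdeg]
  have hMk : M ^ k = ∑ i ∈ Finset.range (r + s), p.coeff i • M ^ i := by
    have h1 : (aeval M) ((X : R[X]) ^ k) = M ^ k := by simp
    have h2 : (aeval M) ((X : R[X]) ^ k) = aeval M p := by
      conv_lhs => rw [← Polynomial.modByMonic_add_div ((X : R[X]) ^ k) M.charpoly]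
      simp [Matrix.aeval_self_charpoly, hp]
    rw [← h1, h2, Polynomial.aeval_eq_sum_range' hpd]
  refine ⟨fun i => p.coeff i, ?_⟩
  have hsplit : Finset.range (r + s) = insert 0 (Finset.Icc 1 (r + s - 1)) := by
    ext x
    simp only [Finset.mem_range, Finset.mem_insert, Finset.mem_Icc]
    omega
  rw [hMk, hsplit, Finset.sum_insert (by simp)]
  ext i j
  simp [Matrix.toBlocks₁₂, Matrix.sum_apply, Matrix.one_apply, Matrix.smul_apply]
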